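/- arXiv:2204.07860 — 4 statements merged into one kernel-verified Lean document; each statement's English description precedes it below -/
import Mathlib

section
/- Let φ : Fin s → Fin r be a surjection (s > r ≥ 2), inducing the coarsening map Φ : V_{N,k} → V_{N,φ(k)} by Φ(x)_ℓ = φ(x_ℓ), where φ(k)_m = Σ_{n : φ(n)=m} k_n. Then for every real-valued function f on V_{N,φ(k)}, (L_{N,φ(k)} f) ∘ Φ = L_{N,k} (f ∘ Φ), where L denotes the pair-transposition graph Laplacian on the respective multislice. -/
open scoped Classical BigOperators

/-- The multislice: tuples `x : Fin N → Fin r` in which each value `m` is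
attained exactly `k m` times. -/
def multislice (N r : ℕ) (k : Fin r → ℕ) : Finset (Fin N → Fin r) :=
  Finset.univ.filter fun x => ∀ m : Fin r,
    (Finset.univ.filter fun ℓ => x ℓ = m).card = k m

/-- Adjacency by pair transpositions of coordinates. -/
def adjacent {N r : ℕ} (x y : Fin N → Fin r) : Prop :=
  x ≠ y ∧ ∃ i j : Fin N, i ≠ j ∧ y = x ∘ Equiv.swap i j

/-- The graph Laplacian on the multislice. -/
noncomputable def lap (N r : ℕ) (k : Fin r → ℕ) (f : (Fin N → Fin r) → ℝ)
    (x : Fin N → Fin r) : ℝ :=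
  ∑ y ∈ (multislice N r k).filter (fun y => adjacent x y), (f x - f y)

/-- The coarsened occupation vector `φ(k)`. -/
def coarse {s r : ℕ} (φ : Fin s → Fin r) (k : Fin s → ℕ) : Fin r → ℕ :=
  fun m => ∑ n ∈ Finset.univ.filter (fun n => φ n = m), k n

lemma comp_swap_eq_self {α β : Type*} [DecidableEq α] (w : α → β) {i j : α}
    (h : w i = w j) : w ∘ Equiv.swap i j = w := by
  funext ℓ
  by_cases hℓi : ℓ = i
  · subst hℓi; simp [h]
  by_cases hℓj : ℓ = j
  · subst hℓj; simp [h]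
  · simp [Equiv.swap_apply_of_ne_of_ne hℓi hℓj]

lemma comp_swap_ne_self {α β : Type*} [DecidableEq α] {w : α → β} {i j : α}
    (h : w ∘ Equiv.swap i j ≠ w) : w i ≠ w j := by
  intro he; exact h (comp_swap_eq_self w he)

lemma swap_eq_of_comp_eq {α β : Type*} [DecidableEq α] (w : α → β) {i1 j1 i2 j2 : α}
    (h : w ∘ Equiv.swap i1 j1 = w ∘ Equiv.swap i2 j2)
    (hne : w ∘ Equiv.swap i1 j1 ≠ w) :
    Equiv.swap i1 j1 = Equiv.swap i2 j2 := by
  have h12 : w i1 ≠ w j1 := comp_swap_ne_self hne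
  have hne2 : w ∘ Equiv.swap i2 j2 ≠ w := h ▸ hne
  have h34 : w i2 ≠ w j2 := comp_swap_ne_self hne2
  have hij2 : i2 ≠ j2 := fun e => h34 (e ▸ rfl)
  have hi2 : i2 = i1 ∨ i2 = j1 := by
    by_contra hc
    push_neg at hc
    have := congrFun h i2
    simp [Equiv.swap_apply_of_ne_of_ne hc.1 hc.2] at this
    exact h34 this
  have hj2 : j2 = i1 ∨ j2 = j1 := by
    by_contra hc
    push_neg at hc
    have := congrFun h j2
    simp [Equiv.swap_apply_of_ne_of_ne hc.1 hc.2] at this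
    exact h34 this.symm
  rcases hi2 with rfl | rfl
  · rcases hj2 with rfl | rfl
    · exact absurd rfl hij2
    · rfl
  · rcases hj2 with rfl | rfl
    · exact (Equiv.swap_comm i2 j2) ▸ rfl
    · exact absurd rfl hij2

lemma count_comp_perm {N s : ℕ} (x : Fin N → Fin s) (e : Equiv.Perm (Fin N)) (n : Fin s) :
    (Finset.univ.filter fun ℓ => x (e ℓ) = n).card
      = (Finset.univ.filter fun ℓ => x ℓ = n).card := by
  apply Finset.card_bij (fun ℓ _ => e ℓ)
  · intro a ha; simp only [Finset.mem_filter, Finset.mem_univ, true_and] at ha ⊢; exact ha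
  · intro a _ b _ hab; exact e.injective hab
  · intro b hb
    refine ⟨e.symm b, ?_, by simp⟩
    simp only [Finset.mem_filter, Finset.mem_univ, true_and] at hb ⊢
    simpa using hb

lemma mem_multislice_comp_swap {N s : ℕ} {k : Fin s → ℕ} {x : Fin N → Fin s}
    (hx : x ∈ multislice N s k) (i j : Fin N) :
    x ∘ Equiv.swap i j ∈ multislice N s k := by
  simp only [multislice, Finset.mem_filter, Finset.mem_univ, true_and] at hx ⊢
  intro m
  rw [← hx m]
  exact count_comp_perm x (Equiv.swap i j) m

lemma mem_multislice_coarse {N s r : ℕ} (φ : Fin s → Fin r) {k : Fin s → ℕ}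
    {x : Fin N → Fin s} (hx : x ∈ multislice N s k) :
    φ ∘ x ∈ multislice N r (coarse φ k) := by
  simp only [multislice, Finset.mem_filter, Finset.mem_univ, true_and] at hx ⊢
  intro m
  have hset : (Finset.univ.filter fun ℓ => (φ ∘ x) ℓ = m)
      = (Finset.univ.filter fun n => φ n = m).biUnion
          (fun n => Finset.univ.filter fun ℓ => x ℓ = n) := by
    ext ℓ
    simp only [Finset.mem_filter, Finset.mem_univ, true_and, Finset.mem_biUnion,
      Function.comp_apply]
    constructor
    · intro h; exact ⟨x ℓ, h, rfl⟩
    · rintro ⟨n, hn, rfl⟩; exact hn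
  rw [hset, Finset.card_biUnion]
  · simp only [coarse]
    exact Finset.sum_congr rfl (fun n _ => hx n)
  · intro a _ b _ hab
    simp only [Finset.disjoint_left, Finset.mem_filter, Finset.mem_univ, true_and]
    rintro ℓ ha hb
    exact hab (ha.symm.trans hb)

/-- The coarsening map intertwines the graph Laplacians:
`(L_{N,φ(k)} f) ∘ Φ = L_{N,k} (f ∘ Φ)`. -/
theorem lap_coarse_intertwine (N s r : ℕ) (hr : 2 ≤ r) (hs : r < s)
    (φ : Fin s → Fin r) (hφ : Function.Surjective φ) (k : Fin s → ℕ)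
    (f : (Fin N → Fin r) → ℝ) (x : Fin N → Fin s)
    (hx : x ∈ multislice N s k) :
    lap N r (coarse φ k) f (φ ∘ x) = lap N s k (fun z => f (φ ∘ z)) x := by
  unfold lap
  -- drop zero terms on the RHS
  rw [← Finset.sum_filter_of_ne (p := fun z => φ ∘ z ≠ φ ∘ x)
    (by
      intro z _ hz hzeq
      exact absurd (by simp only [hzeq, sub_self]) hz)]
  rw [Finset.filter_filter]
  symm
  apply Finset.sum_bij (fun z _ => φ ∘ z)
  · -- maps into
    intro z hz
    obtain ⟨hzm, hadj, hzne⟩ := Finset.mem_filter.mp hz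
    refine Finset.mem_filter.mpr ⟨mem_multislice_coarse φ hzm, ?_⟩
    obtain ⟨hne, i, j, hij, rfl⟩ := hadj
    exact ⟨fun h => hzne h.symm, i, j, hij, rfl⟩
  · -- injective
    intro z1 hz1 z2 hz2 heq
    obtain ⟨_, ⟨_, i1, j1, _, rfl⟩, hne1⟩ := Finset.mem_filter.mp hz1
    obtain ⟨_, ⟨_, i2, j2, _, rfl⟩, hne2⟩ := Finset.mem_filter.mp hz2
    have h1 : (φ ∘ x) ∘ Equiv.swap i1 j1 = (φ ∘ x) ∘ Equiv.swap i2 j2 := heq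
    have h2 : (φ ∘ x) ∘ Equiv.swap i1 j1 ≠ φ ∘ x := hne1
    have hsw := swap_eq_of_comp_eq (φ ∘ x) h1 h2
    rw [show (Equiv.swap i1 j1 : Equiv.Perm (Fin N)) = Equiv.swap i2 j2 from hsw]
  · -- surjective
    intro y hy
    obtain ⟨hym, hyne, i, j, hij, rfl⟩ := Finset.mem_filter.mp hy
    have hphix : φ (x i) ≠ φ (x j) := comp_swap_ne_self (w := φ ∘ x) (fun h => hyne h.symm)
    have hxne : x ≠ x ∘ Equiv.swap i j := by
      intro h
      apply hphix
      have := congrFun h i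
      simp only [Function.comp_apply, Equiv.swap_apply_left] at this
      exact congrArg φ this
    refine ⟨x ∘ Equiv.swap i j, Finset.mem_filter.mpr
      ⟨mem_multislice_comp_swap hx i j, ⟨hxne, i, j, hij, rfl⟩, ?_⟩, rfl⟩
    exact fun h => hyne (h.symm : _)
  · -- values agree
    intro z hz
    rfl
end

section
/- If the multislice V_{N,k'} is a coarsening of V_{N,k} (i.e., k' = φ(k) for some surjection φ), then every eigenvalue of the graph Laplacian L_{N,k'} is also an eigenvalue of L_{N,k}. In particular, the spectral gap of L_{N,k'} is at least the spectral gap of L_{N,k}. -/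
open scoped Classical BigOperators

/-- `lam` is an eigenvalue of the graph Laplacian on the multislice. -/
def IsLapEigenvalue (N r : ℕ) (k : Fin r → ℕ) (lam : ℝ) : Prop :=
  ∃ f : (Fin N → Fin r) → ℝ, (∃ x ∈ multislice N r k, f x ≠ 0) ∧
    ∀ x ∈ multislice N r k, lap N r k f x = lam * f x

-- auxiliary lemmas, part 1
lemma mem_multislice_iff {N r : ℕ} {k : Fin r → ℕ} {x : Fin N → Fin r} :
    x ∈ multislice N r k ↔ ∀ m : Fin r,
      (Finset.univ.filter fun ℓ => x ℓ = m).card = k m := by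
  simp [multislice]

lemma swap_mem_multislice {N r : ℕ} {k : Fin r → ℕ} {x : Fin N → Fin r}
    (hx : x ∈ multislice N r k) (i j : Fin N) :
    (x ∘ Equiv.swap i j) ∈ multislice N r k := by
  rw [mem_multislice_iff] at hx ⊢
  intro m
  rw [← hx m]
  have h : (Finset.univ.filter fun ℓ => (x ∘ Equiv.swap i j) ℓ = m)
      = (Finset.univ.filter fun ℓ => x ℓ = m).image (Equiv.swap i j) := by
    ext ℓ
    simp only [Finset.mem_filter, Finset.mem_univ, true_and, Finset.mem_image,
      Function.comp_apply]
    constructor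
    · intro h; exact ⟨Equiv.swap i j ℓ, h, Equiv.swap_apply_self _ _ _⟩
    · rintro ⟨a, ha, rfl⟩; rwa [Equiv.swap_apply_self]
  rw [h, Finset.card_image_of_injective _ (Equiv.injective _)]

lemma comp_mem_multislice {N s r : ℕ} {k : Fin s → ℕ} (φ : Fin s → Fin r)
    {x : Fin N → Fin s} (hx : x ∈ multislice N s k) :
    (φ ∘ x) ∈ multislice N r (coarse φ k) := by
  rw [mem_multislice_iff] at hx ⊢
  intro m
  have h : (Finset.univ.filter fun ℓ => (φ ∘ x) ℓ = m)
      = (Finset.univ.filter fun n => φ n = m).biUnion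
          (fun n => Finset.univ.filter fun ℓ => x ℓ = n) := by
    ext ℓ
    simp only [Finset.mem_filter, Finset.mem_univ, true_and, Finset.mem_biUnion,
      Function.comp_apply]
    constructor
    · intro h; exact ⟨x ℓ, h, rfl⟩
    · rintro ⟨n, hn, rfl⟩; exact hn
  rw [h, Finset.card_biUnion]
  · exact Finset.sum_congr rfl fun n _ => hx n
  · intro a _ b _ hab
    simp only [Finset.disjoint_left, Finset.mem_filter, Finset.mem_univ, true_and]
    rintro ℓ h1 h2
    exact hab (h1 ▸ h2 ▸ rfl)
lemma comp_swap_eq_self_s5 {N r : ℕ} {u : Fin N → Fin r} {i j : Fin N} (h : u i = u j) :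
    u ∘ Equiv.swap i j = u := by
  funext ℓ
  rcases eq_or_ne ℓ i with rfl | hi
  · simpa [Equiv.swap_apply_left] using h.symm
  rcases eq_or_ne ℓ j with rfl | hj
  · simpa [Equiv.swap_apply_right] using h
  · simp [Equiv.swap_apply_of_ne_of_ne hi hj]

lemma comp_swap_ne_iff {N r : ℕ} {u : Fin N → Fin r} {i j : Fin N}
    (huv : u i ≠ u j) (ℓ : Fin N) :
    (u ∘ Equiv.swap i j) ℓ ≠ u ℓ ↔ ℓ = i ∨ ℓ = j := by
  rcases eq_or_ne ℓ i with rfl | hi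
  · simp [Equiv.swap_apply_left, huv.symm]
  rcases eq_or_ne ℓ j with rfl | hj
  · simp [Equiv.swap_apply_right, huv]
  · simp [Equiv.swap_apply_of_ne_of_ne hi hj, hi, hj]

lemma comp_swap_inj {N r : ℕ} {u : Fin N → Fin r} {i j i' j' : Fin N}
    (hij : i ≠ j) (hij' : i' ≠ j') (h1 : u i ≠ u j) (h2 : u i' ≠ u j')
    (h : u ∘ Equiv.swap i j = u ∘ Equiv.swap i' j') :
    Equiv.swap i j = Equiv.swap i' j' := by
  have key : ∀ ℓ, (ℓ = i ∨ ℓ = j) ↔ (ℓ = i' ∨ ℓ = j') := by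
    intro ℓ
    rw [← comp_swap_ne_iff h1 ℓ, h, comp_swap_ne_iff h2 ℓ]
  have hi' : i' = i ∨ i' = j := (key i').mpr (Or.inl rfl)
  have hj' : j' = i ∨ j' = j := (key j').mpr (Or.inr rfl)
  rcases hi' with rfl | rfl
  · rcases hj' with rfl | rfl
    · exact absurd rfl hij'
    · rfl
  · rcases hj' with rfl | rfl
    · exact Equiv.swap_comm _ _
    · exact absurd rfl hij'
lemma exists_refine {N s : ℕ} (n0 : Fin s) (k : Fin s → ℕ) (T : Finset (Fin s)) :
    ∀ (A : Finset (Fin N)), A.card = ∑ n ∈ T, k n →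
    ∃ g : Fin N → Fin s, (∀ a ∈ A, g a ∈ T) ∧
      ∀ n ∈ T, (A.filter fun a => g a = n).card = k n := by
  induction T using Finset.induction_on with
  | empty =>
    intro A hA
    refine ⟨fun _ => n0, ?_, ?_⟩
    · intro a ha
      rw [Finset.sum_empty, Finset.card_eq_zero] at hA
      simp [hA] at ha
    · intro n hn; simp at hn
  | @insert n T' hn ih =>
    intro A hA
    rw [Finset.sum_insert hn] at hA
    have hkn : k n ≤ A.card := by rw [hA]; exact Nat.le_add_right _ _
    obtain ⟨B, hBA, hB⟩ := Finset.exists_subset_card_eq hkn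
    have hAB : (A \ B).card = ∑ n' ∈ T', k n' := by
      rw [Finset.card_sdiff_of_subset hBA, hA, hB, Nat.add_sub_cancel_left]
    obtain ⟨g', hg'mem, hg'⟩ := ih (A \ B) hAB
    refine ⟨fun a => if a ∈ B then n else g' a, ?_, ?_⟩
    · intro a ha
      by_cases hb : a ∈ B
      · simp [hb]
      · simp only [hb, if_false]
        exact Finset.mem_insert_of_mem (hg'mem a (Finset.mem_sdiff.mpr ⟨ha, hb⟩))
    · intro n' hn'
      rcases Finset.mem_insert.mp hn' with rfl | hn'T
      · have hfil : (A.filter fun a => (if a ∈ B then n' else g' a) = n') = B := by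
          ext a
          simp only [Finset.mem_filter]
          constructor
          · rintro ⟨ha, hcond⟩
            by_contra hb
            rw [if_neg hb] at hcond
            exact hn (hcond ▸ hg'mem a (Finset.mem_sdiff.mpr ⟨ha, hb⟩))
          · intro hb
            exact ⟨hBA hb, by rw [if_pos hb]⟩
        rw [hfil, hB]
      · have hne : n ≠ n' := fun h => hn (h ▸ hn'T)
        have hfil : (A.filter fun a => (if a ∈ B then n else g' a) = n')
            = ((A \ B).filter fun a => g' a = n') := by
          ext a
          simp only [Finset.mem_filter, Finset.mem_sdiff]
          constructor
          · rintro ⟨ha, hcond⟩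
            by_cases hb : a ∈ B
            · rw [if_pos hb] at hcond; exact absurd hcond hne
            · rw [if_neg hb] at hcond; exact ⟨⟨ha, hb⟩, hcond⟩
          · rintro ⟨⟨ha, hb⟩, hcond⟩
            exact ⟨ha, by rw [if_neg hb]; exact hcond⟩
        rw [hfil, hg' n' hn'T]

lemma exists_lift {N s r : ℕ} (hs : 0 < s) (φ : Fin s → Fin r) (k : Fin s → ℕ)
    {z : Fin N → Fin r} (hz : z ∈ multislice N r (coarse φ k)) :
    ∃ x ∈ multislice N s k, φ ∘ x = z := by
  rw [mem_multislice_iff] at hz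
  have H : ∀ m : Fin r, ∃ g : Fin N → Fin s,
      (∀ a ∈ (Finset.univ.filter fun ℓ => z ℓ = m), g a ∈ Finset.univ.filter fun n => φ n = m) ∧
      ∀ n ∈ (Finset.univ.filter fun n => φ n = m),
        ((Finset.univ.filter fun ℓ => z ℓ = m).filter fun a => g a = n).card = k n := by
    intro m
    exact exists_refine ⟨0, hs⟩ k _ _ (hz m)
  choose g hgmem hgcount using H
  refine ⟨fun ℓ => g (z ℓ) ℓ, ?_, ?_⟩
  · rw [mem_multislice_iff]
    intro n
    have hfil : (Finset.univ.filter fun ℓ => g (z ℓ) ℓ = n)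
        = ((Finset.univ.filter fun ℓ => z ℓ = φ n).filter fun a => g (φ n) a = n) := by
      ext ℓ
      simp only [Finset.mem_filter, Finset.mem_univ, true_and]
      constructor
      · intro h
        have hm := hgmem (z ℓ) ℓ (by simp)
        simp only [Finset.mem_filter, Finset.mem_univ, true_and] at hm
        rw [h] at hm
        exact ⟨hm.symm, by rw [hm]; exact h⟩
      · rintro ⟨h1, h2⟩
        rw [h1]; exact h2
    rw [hfil]
    exact hgcount (φ n) n (by simp)
  · funext ℓ
    have hm := hgmem (z ℓ) ℓ (by simp)
    simp only [Finset.mem_filter, Finset.mem_univ, true_and] at hm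
    exact hm
lemma lap_comp {N s r : ℕ} (k : Fin s → ℕ) (φ : Fin s → Fin r)
    (f : (Fin N → Fin r) → ℝ) {x : Fin N → Fin s} (hx : x ∈ multislice N s k) :
    lap N s k (fun y => f (φ ∘ y)) x = lap N r (coarse φ k) f (φ ∘ x) := by
  unfold lap
  rw [← Finset.sum_filter_add_sum_filter_not
    ((multislice N s k).filter (fun y => adjacent x y)) (fun y => φ ∘ y = φ ∘ x)]
  have h0 : ∑ y ∈ ((multislice N s k).filter (fun y => adjacent x y)).filter
      (fun y => φ ∘ y = φ ∘ x), ((fun y => f (φ ∘ y)) x - (fun y => f (φ ∘ y)) y) = 0 := by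
    apply Finset.sum_eq_zero
    intro y hy
    have := (Finset.mem_filter.mp hy).2
    simp only [this, sub_self]
  rw [h0, zero_add]
  apply Finset.sum_bij (fun y _ => φ ∘ y)
  · -- maps into target
    intro y hy
    simp only [Finset.mem_filter] at hy ⊢
    obtain ⟨⟨hyM, hadj⟩, hyne⟩ := hy
    refine ⟨?_, ?_⟩
    · exact comp_mem_multislice φ hyM
    · obtain ⟨hne, i, j, hij, hswap⟩ := hadj
      refine ⟨fun h => hyne h.symm, i, j, hij, ?_⟩
      rw [hswap]; rfl
  · -- injective
    intro y₁ hy₁ y₂ hy₂ heq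
    simp only [Finset.mem_filter] at hy₁ hy₂
    obtain ⟨⟨_, ⟨_, i, j, hij, h1⟩⟩, hne1⟩ := hy₁
    obtain ⟨⟨_, ⟨_, i', j', hij', h2⟩⟩, hne2⟩ := hy₂
    have hu1 : φ (x i) ≠ φ (x j) := by
      intro h
      apply hne1
      rw [h1]
      show (φ ∘ x) ∘ Equiv.swap i j = φ ∘ x
      exact comp_swap_eq_self_s5 h
    have hu2 : φ (x i') ≠ φ (x j') := by
      intro h
      apply hne2
      rw [h2]
      show (φ ∘ x) ∘ Equiv.swap i' j' = φ ∘ x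
      exact comp_swap_eq_self_s5 h
    have hcomp : (φ ∘ x) ∘ Equiv.swap i j = (φ ∘ x) ∘ Equiv.swap i' j' := by
      rw [h1, h2] at heq
      exact heq
    have hsw := comp_swap_inj hij hij' hu1 hu2 hcomp
    rw [h1, h2, hsw]
  · -- surjective
    intro z hz
    simp only [Finset.mem_filter] at hz
    obtain ⟨hzM, hzne, i, j, hij, hzswap⟩ := hz
    have hu : φ (x i) ≠ φ (x j) := by
      intro h
      apply hzne
      rw [hzswap]
      exact (comp_swap_eq_self_s5 (u := φ ∘ x) (i := i) (j := j) h).symm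
    have hxij : x i ≠ x j := fun h => hu (h ▸ rfl)
    refine ⟨x ∘ Equiv.swap i j, ?_, ?_⟩
    · simp only [Finset.mem_filter]
      refine ⟨⟨swap_mem_multislice hx i j, ?_, i, j, hij, rfl⟩, ?_⟩
      · intro h
        have := congrFun h i
        simp only [Function.comp_apply, Equiv.swap_apply_left] at this
        exact hxij this
      · show ¬ (φ ∘ (x ∘ Equiv.swap i j) = φ ∘ x)
        intro h
        apply hzne
        rw [hzswap]
        exact h.symm
    · rw [hzswap]; rfl
  · intro y hy
    rfl
lemma adjacent_symm {N r : ℕ} {x y : Fin N → Fin r} (h : adjacent x y) : adjacent y x := by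
  obtain ⟨hne, i, j, hij, hswap⟩ := h
  refine ⟨hne.symm, i, j, hij, ?_⟩
  rw [hswap]
  funext ℓ
  simp [Function.comp, Equiv.swap_apply_self]

lemma eig_nonneg {N r : ℕ} {k : Fin r → ℕ} {lam : ℝ}
    (h : IsLapEigenvalue N r k lam) : 0 ≤ lam := by
  obtain ⟨f, ⟨x₀, hx₀M, hx₀⟩, heig⟩ := h
  set M := multislice N r k with hM
  have hS : ∑ x ∈ M, f x * lap N r k f x
      = ∑ x ∈ M, ∑ y ∈ M, (if adjacent x y then f x * (f x - f y) else 0) := by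
    apply Finset.sum_congr rfl
    intro x _
    rw [lap, Finset.mul_sum, Finset.sum_filter]
  have hswap : ∑ x ∈ M, ∑ y ∈ M, (if adjacent x y then f y * (f y - f x) else 0)
      = ∑ x ∈ M, ∑ y ∈ M, (if adjacent x y then f x * (f x - f y) else 0) := by
    rw [Finset.sum_comm]
    apply Finset.sum_congr rfl
    intro x _
    apply Finset.sum_congr rfl
    intro y _
    congr 1
    exact propext ⟨adjacent_symm, adjacent_symm⟩
  have hQ : ∑ x ∈ M, ∑ y ∈ M, (if adjacent x y then (f x - f y) ^ 2 else 0)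
      = 2 * ∑ x ∈ M, f x * lap N r k f x := by
    have hterm : ∀ x y : Fin N → Fin r,
        (if adjacent x y then (f x - f y) ^ 2 else 0)
        = (if adjacent x y then f x * (f x - f y) else 0)
          + (if adjacent x y then f y * (f y - f x) else 0) := by
      intro x y
      split <;> ring
    simp_rw [hterm, Finset.sum_add_distrib]
    rw [hswap, ← hS]
    ring
  have hQ0 : (0 : ℝ) ≤ ∑ x ∈ M, ∑ y ∈ M, (if adjacent x y then (f x - f y) ^ 2 else 0) := by
    apply Finset.sum_nonneg
    intro x _
    apply Finset.sum_nonneg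
    intro y _
    split
    · exact sq_nonneg _
    · exact le_rfl
  have hSpos : (0 : ℝ) ≤ ∑ x ∈ M, f x * lap N r k f x := by
    rw [hQ] at hQ0
    linarith
  have hlam : ∑ x ∈ M, f x * lap N r k f x = lam * ∑ x ∈ M, f x ^ 2 := by
    rw [Finset.mul_sum]
    apply Finset.sum_congr rfl
    intro x hxM
    rw [heig x hxM]
    ring
  have hc : 0 < ∑ x ∈ M, f x ^ 2 := by
    apply Finset.sum_pos'
    · intro x _; exact sq_nonneg _
    · exact ⟨x₀, hx₀M, by positivity⟩
  rw [hlam] at hSpos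
  nlinarith

/-- Every eigenvalue of the Laplacian of a coarsening `V_{N,φ(k)}` is an
eigenvalue of the Laplacian of `V_{N,k}`; in particular the spectral gap (the
least nonzero eigenvalue) of the coarser multislice is at least that of the
finer one. -/
theorem eigenvalue_of_coarsening (N s r : ℕ) (hr : 2 ≤ r) (hs : r < s)
    (φ : Fin s → Fin r) (hφ : Function.Surjective φ) (k : Fin s → ℕ)
    (hk : ∑ n, k n = N)
    (hne : {lam : ℝ | lam ≠ 0 ∧ IsLapEigenvalue N r (coarse φ k) lam}.Nonempty) :
    (∀ lam : ℝ, IsLapEigenvalue N r (coarse φ k) lam → IsLapEigenvalue N s k lam) ∧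
    sInf {lam : ℝ | lam ≠ 0 ∧ IsLapEigenvalue N s k lam}
      ≤ sInf {lam : ℝ | lam ≠ 0 ∧ IsLapEigenvalue N r (coarse φ k) lam} := by
  have hspos : 0 < s := lt_of_le_of_lt (Nat.zero_le r) hs
  have main : ∀ lam : ℝ, IsLapEigenvalue N r (coarse φ k) lam → IsLapEigenvalue N s k lam := by
    intro lam ⟨f, ⟨z₀, hz₀M, hz₀⟩, heig⟩
    refine ⟨fun y => f (φ ∘ y), ?_, ?_⟩
    · obtain ⟨x₀, hx₀M, hx₀z⟩ := exists_lift hspos φ k hz₀M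
      exact ⟨x₀, hx₀M, by show f (φ ∘ x₀) ≠ 0; rw [hx₀z]; exact hz₀⟩
    · intro x hxM
      rw [lap_comp k φ f hxM]
      exact heig (φ ∘ x) (comp_mem_multislice φ hxM)
  refine ⟨main, ?_⟩
  apply csInf_le_csInf
  · exact ⟨0, fun lam hlam => eig_nonneg hlam.2⟩
  · exact hne
  · intro lam hlam
    exact ⟨hlam.1, main lam hlam.2⟩
end

section
/- Let k = (k_0,…,k_{r-1}) be nonnegative integers summing to N, and let g : Fin r → ℝ satisfy Σ_m k_m g(m) = 0. Fix ℓ ∈ Fin N and define f on the multislice V_{N,k} by f(x) = g(x_ℓ). Then L_{N,k} f = N f, where L_{N,k} is the pair-transposition graph Laplacian. -/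
open scoped Classical BigOperators

/-- If `∑ m, k m • g m = 0` then `x ↦ g (x ℓ)` is an eigenfunction of the
multislice graph Laplacian with eigenvalue `N`. -/
theorem lap_single_coordinate_eigenfunction (N r : ℕ) (k : Fin r → ℕ)
    (hk : ∑ m, k m = N) (g : Fin r → ℝ) (hg : ∑ m, (k m : ℝ) * g m = 0)
    (ℓ : Fin N) (x : Fin N → Fin r) (hx : x ∈ multislice N r k) :
    lap N r k (fun z => g (z ℓ)) x = N * g (x ℓ) := by
  classical
  simp only [multislice, Finset.mem_filter, Finset.mem_univ, true_and] at hx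
  -- counts are preserved by composing with a permutation
  have hcount : ∀ (σ : Equiv.Perm (Fin N)) (m : Fin r),
      (Finset.univ.filter fun t => x (σ t) = m).card
        = (Finset.univ.filter fun t => x t = m).card := by
    intro σ m
    have : (Finset.univ.filter fun t => x (σ t) = m)
        = (Finset.univ.filter fun t => x t = m).map σ.symm.toEmbedding := by
      ext t
      simp [Equiv.symm_apply_eq, eq_comm]
    rw [this, Finset.card_map]
  set A := (multislice N r k).filter (fun y => adjacent x y ∧ y ℓ ≠ x ℓ) with hA
  set T := Finset.univ.filter (fun j => x j ≠ x ℓ) with hT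
  have h1 : lap N r k (fun z => g (z ℓ)) x = ∑ y ∈ A, (g (x ℓ) - g (y ℓ)) := by
    rw [lap, hA, ← Finset.filter_filter]
    exact (Finset.sum_filter_of_ne (by
      intro y _ hy hyl
      exact hy (by rw [hyl, sub_self])) ).symm
  have h2 : ∑ j ∈ T, (g (x ℓ) - g (x j)) = ∑ y ∈ A, (g (x ℓ) - g (y ℓ)) := by
    refine Finset.sum_bij (fun j _ => x ∘ Equiv.swap ℓ j) ?_ ?_ ?_ ?_
    · intro j hj
      rw [hT, Finset.mem_filter] at hj
      have hjl : j ≠ ℓ := fun h => hj.2 (by rw [h])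
      rw [hA, Finset.mem_filter]
      refine ⟨?_, ⟨?_, ℓ, j, hjl.symm, rfl⟩, ?_⟩
      · simp only [multislice, Finset.mem_filter, Finset.mem_univ, true_and]
        intro m
        rw [show (Finset.univ.filter fun t => (x ∘ Equiv.swap ℓ j) t = m)
            = (Finset.univ.filter fun t => x (Equiv.swap ℓ j t) = m) from rfl,
          hcount, hx]
      · intro h
        have := congrFun h ℓ
        simp [Equiv.swap_apply_left] at this
        exact hj.2 this.symm
      · simpa [Equiv.swap_apply_left] using hj.2
    · intro j₁ hj₁ j₂ hj₂ h
      by_contra hne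
      rw [hT, Finset.mem_filter] at hj₁ hj₂
      have h1l : j₁ ≠ ℓ := fun h => hj₁.2 (by rw [h])
      have h2l : j₂ ≠ ℓ := fun h => hj₂.2 (by rw [h])
      have := congrFun h j₁
      simp only [Function.comp_apply, Equiv.swap_apply_right,
        Equiv.swap_apply_of_ne_of_ne h1l hne] at this
      exact hj₁.2 this.symm
    · intro y hy
      rw [hA, Finset.mem_filter] at hy
      obtain ⟨hym, ⟨hxy, i, j, hij, hswap⟩, hyl⟩ := hy
      have hl : Equiv.swap i j ℓ ≠ ℓ := by
        intro h
        apply hyl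
        rw [hswap]; simp [h]
      have hmem : ℓ = i ∨ ℓ = j := by
        by_contra hc
        push_neg at hc
        exact hl (Equiv.swap_apply_of_ne_of_ne hc.1 hc.2)
      rcases hmem with h | h
      · subst h
        refine ⟨j, ?_, ?_⟩
        · rw [hT, Finset.mem_filter]
          refine ⟨Finset.mem_univ _, ?_⟩
          intro hxj
          apply hyl
          rw [hswap]
          simp [Equiv.swap_apply_left, hxj]
        · exact hswap.symm
      · subst h
        refine ⟨i, ?_, ?_⟩
        · rw [hT, Finset.mem_filter]
          refine ⟨Finset.mem_univ _, ?_⟩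
          intro hxi
          apply hyl
          rw [hswap]
          simp [Equiv.swap_apply_right, hxi]
        · rw [Equiv.swap_comm] at hswap
          exact hswap.symm
    · intro j hj
      rw [hT, Finset.mem_filter] at hj
      simp [Equiv.swap_apply_left]
  -- now compute the sum over T
  have hcardT : (T.card : ℝ) = (N : ℝ) - k (x ℓ) := by
    have := Finset.card_filter_add_card_filter_not
      (s := (Finset.univ : Finset (Fin N))) (p := fun j => x j = x ℓ)
    rw [hx (x ℓ)] at this
    have hN : (Finset.univ : Finset (Fin N)).card = N := Finset.card_univ.trans (Fintype.card_fin N)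
    have hTc : T.card = (Finset.univ.filter fun a => ¬ x a = x ℓ).card := rfl
    have : k (x ℓ) + T.card = N := by omega
    have := congrArg (fun n : ℕ => (n : ℝ)) this
    push_cast at this
    linarith
  have hsum_univ : ∑ j : Fin N, g (x j) = 0 := by
    rw [← hg]
    rw [← Finset.sum_fiberwise (Finset.univ) (fun j => x j) (fun j => g (x j))]
    refine Finset.sum_congr rfl fun m _ => ?_
    calc ∑ j ∈ Finset.univ.filter (fun j => x j = m), g (x j)
        = ∑ _j ∈ Finset.univ.filter (fun j => x j = m), g m := by
          refine Finset.sum_congr rfl fun j hj => ?_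
          rw [(Finset.mem_filter.mp hj).2]
      _ = (k m : ℝ) * g m := by rw [Finset.sum_const, hx m, nsmul_eq_mul]
  have hsumT : ∑ j ∈ T, g (x j) = -(k (x ℓ) : ℝ) * g (x ℓ) := by
    have hsplit : ∑ j ∈ Finset.univ.filter (fun j => x j = x ℓ), g (x j)
        + ∑ j ∈ T, g (x j) = ∑ j : Fin N, g (x j) := by
      rw [hT]
      exact Finset.sum_filter_add_sum_filter_not _ _ _
    have h1 : ∑ j ∈ Finset.univ.filter (fun j => x j = x ℓ), g (x j)
        = (k (x ℓ) : ℝ) * g (x ℓ) := by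
      calc ∑ j ∈ Finset.univ.filter (fun j => x j = x ℓ), g (x j)
          = ∑ _j ∈ Finset.univ.filter (fun j => x j = x ℓ), g (x ℓ) := by
            refine Finset.sum_congr rfl fun j hj => ?_
            rw [(Finset.mem_filter.mp hj).2]
        _ = (k (x ℓ) : ℝ) * g (x ℓ) := by rw [Finset.sum_const, hx (x ℓ), nsmul_eq_mul]
    rw [hsum_univ, h1] at hsplit
    linarith
  rw [h1, ← h2, Finset.sum_sub_distrib, Finset.sum_const, hsumT, nsmul_eq_mul, hcardT]
  ring
end

section
/- Let N ≥ 2, let k = (k_0,…,k_{r-1}) be positive integers summing to N, and let g_1,…,g_N : Fin r → ℝ each satisfy Σ_m k_m g_ℓ(m) = 0. Then Σ_{ℓ=1}^N g_ℓ(x_ℓ) = 0 for all x in the multislice V_{N,k} if and only if g_1 = g_2 = ⋯ = g_N. -/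
open scoped Classical BigOperators

lemma multislice_nonempty (N r : ℕ) (k : Fin r → ℕ) (hk : ∑ m, k m = N) :
    (multislice N r k).Nonempty := by
  have hcard : Fintype.card (Σ m : Fin r, Fin (k m)) = N := by
    simp [Fintype.card_sigma, hk]
  let e : (Σ m : Fin r, Fin (k m)) ≃ Fin N := Fintype.equivFinOfCardEq hcard
  refine ⟨fun ℓ => (e.symm ℓ).1, ?_⟩
  simp only [multislice, Finset.mem_filter, Finset.mem_univ, true_and]
  intro m
  have h1 : (Finset.univ.filter fun ℓ : Fin N => (e.symm ℓ).1 = m).card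
      = (Finset.univ.filter fun p : Σ m : Fin r, Fin (k m) => p.1 = m).card := by
    refine (Finset.card_equiv e.symm fun ℓ => ?_).symm.symm
    simp
  rw [h1, show k m = (Finset.univ : Finset (Fin (k m))).card by simp]
  refine Finset.card_bij'
    (fun (p : Σ m' : Fin r, Fin (k m')) (hp : p ∈ Finset.univ.filter fun p => p.1 = m) =>
      Fin.cast (congrArg k (Finset.mem_filter.mp hp).2) p.2)
    (fun (t : Fin (k m)) _ => (⟨m, t⟩ : Σ m' : Fin r, Fin (k m'))) ?_ ?_ ?_ ?_
  · intro a ha; simp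
  · intro b hb; simp
  · intro a ha
    obtain ⟨m', t⟩ := a
    have hm : m' = m := (Finset.mem_filter.mp ha).2
    subst hm
    rfl
  · intro b hb; rfl

lemma multislice_comp_perm (N r : ℕ) (k : Fin r → ℕ) (x : Fin N → Fin r)
    (hx : x ∈ multislice N r k) (σ : Equiv.Perm (Fin N)) :
    (fun ℓ => x (σ ℓ)) ∈ multislice N r k := by
  simp only [multislice, Finset.mem_filter, Finset.mem_univ, true_and] at hx ⊢
  intro m
  rw [← hx m]
  exact Finset.card_equiv σ (fun ℓ => by simp)

/-- For `g_1, …, g_N` in `K_{N,k}`, the sum `∑ ℓ, g_ℓ(x_ℓ)` vanishes on the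
whole multislice iff all the `g_ℓ` coincide. -/
theorem sum_vanishes_iff_all_equal (N r : ℕ) (hN : 2 ≤ N) (k : Fin r → ℕ)
    (hk : ∑ m, k m = N) (hpos : ∀ m, 1 ≤ k m) (g : Fin N → Fin r → ℝ)
    (hg : ∀ ℓ, ∑ m, (k m : ℝ) * g ℓ m = 0) :
    (∀ x ∈ multislice N r k, ∑ ℓ, g ℓ (x ℓ) = 0) ↔ ∀ i j, g i = g j := by
  have hN0 : 0 < N := by omega
  constructor
  · intro H i j
    rcases eq_or_ne i j with rfl | hij
    · rfl
    -- key: the difference g i - g j takes the same value at any two distinct points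
    have key : ∀ a b : Fin r, a ≠ b → g i a - g j a = g i b - g j b := by
      intro a b hab
      -- find x in the multislice with x i = a, x j = b
      obtain ⟨x0, hx0⟩ := multislice_nonempty N r k hk
      have hx0' := hx0
      simp only [multislice, Finset.mem_filter, Finset.mem_univ, true_and] at hx0'
      have hpa : ∃ p, x0 p = a := by
        have := hx0' a
        have h1 := hpos a
        rw [← this] at h1
        obtain ⟨p, hp⟩ := Finset.card_pos.mp (by omega : 0 < (Finset.univ.filter fun ℓ => x0 ℓ = a).card)
        exact ⟨p, (Finset.mem_filter.mp hp).2⟩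
      have hqb : ∃ q, x0 q = b := by
        have := hx0' b
        have h1 := hpos b
        rw [← this] at h1
        obtain ⟨q, hq⟩ := Finset.card_pos.mp (by omega : 0 < (Finset.univ.filter fun ℓ => x0 ℓ = b).card)
        exact ⟨q, (Finset.mem_filter.mp hq).2⟩
      obtain ⟨p, hp⟩ := hpa
      obtain ⟨q, hq⟩ := hqb
      have hpq : p ≠ q := by
        intro h; apply hab; rw [← hp, ← hq, h]
      -- build permutation σ with σ i = p, σ j = q
      set τ : Equiv.Perm (Fin N) := Equiv.swap i p with hτ
      set σ : Equiv.Perm (Fin N) := τ.trans (Equiv.swap (τ j) q) with hσ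
      have hσi : σ i = p := by
        have h1 : τ i = p := Equiv.swap_apply_left i p
        have h2 : p ≠ τ j := by
          rw [← h1]; exact fun h => hij (τ.injective h)
        simp only [hσ, Equiv.trans_apply, h1]
        exact Equiv.swap_apply_of_ne_of_ne h2 hpq
      have hσj : σ j = q := by
        simp only [hσ, Equiv.trans_apply]
        exact Equiv.swap_apply_left (τ j) q
      set x : Fin N → Fin r := fun ℓ => x0 (σ ℓ) with hxdef
      have hx : x ∈ multislice N r k := multislice_comp_perm N r k x0 hx0 σ
      have hxi : x i = a := by rw [hxdef]; simp only; rw [hσi, hp]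
      have hxj : x j = b := by rw [hxdef]; simp only; rw [hσj, hq]
      -- x composed with swap i j is also in the multislice
      have hx2 : (fun ℓ => x (Equiv.swap i j ℓ)) ∈ multislice N r k :=
        multislice_comp_perm N r k x hx (Equiv.swap i j)
      have h1 := H x hx
      have h2 := H _ hx2
      have hsum : ∑ ℓ, (g ℓ (x ℓ) - g ℓ (x (Equiv.swap i j ℓ))) = 0 := by
        rw [Finset.sum_sub_distrib, h1, h2, sub_zero]
      have hvanish : ∀ ℓ ∈ Finset.univ, ℓ ∉ ({i, j} : Finset (Fin N)) →
          g ℓ (x ℓ) - g ℓ (x (Equiv.swap i j ℓ)) = 0 := by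
        intro ℓ _ hℓ
        simp only [Finset.mem_insert, Finset.mem_singleton, not_or] at hℓ
        rw [Equiv.swap_apply_of_ne_of_ne hℓ.1 hℓ.2, sub_self]
      have hpair : ∑ ℓ ∈ ({i, j} : Finset (Fin N)), (g ℓ (x ℓ) - g ℓ (x (Equiv.swap i j ℓ))) = 0 := by
        rw [Finset.sum_subset (Finset.subset_univ _) hvanish, hsum]
      rw [Finset.sum_pair hij] at hpair
      rw [Equiv.swap_apply_left, Equiv.swap_apply_right, hxi, hxj] at hpair
      linarith
    -- r > 0
    have hr : 0 < r := by
      by_contra h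
      push_neg at h
      interval_cases r
      simp at hk
      omega
    set m0 : Fin r := ⟨0, hr⟩ with hm0
    set c : ℝ := g i m0 - g j m0 with hc
    have hconst : ∀ a, g i a - g j a = c := by
      intro a
      rcases eq_or_ne a m0 with rfl | h
      · rfl
      · exact key a m0 h
    have hzero : (N : ℝ) * c = 0 := by
      have h1 : ∑ m, (k m : ℝ) * (g i m - g j m) = 0 := by
        have := hg i; have := hg j
        simp only [mul_sub, Finset.sum_sub_distrib]
        rw [hg i, hg j, sub_zero]
      have h2 : ∑ m, (k m : ℝ) * (g i m - g j m) = ∑ m, (k m : ℝ) * c := by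
        exact Finset.sum_congr rfl fun m _ => by rw [hconst m]
      rw [h2, ← Finset.sum_mul] at h1
      rw [← h1]
      congr 1
      rw [← hk]
      push_cast
      rfl
    have hc0 : c = 0 := by
      have : (N : ℝ) ≠ 0 := Nat.cast_ne_zero.mpr (by omega)
      rcases mul_eq_zero.mp hzero with h | h
      · exact absurd h this
      · exact h
    funext a
    have := hconst a
    rw [hc0] at this
    linarith
  · intro h x hx
    simp only [multislice, Finset.mem_filter, Finset.mem_univ, true_and] at hx
    have h0 : ∀ ℓ, g ℓ = g ⟨0, hN0⟩ := fun ℓ => h ℓ ⟨0, hN0⟩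
    calc ∑ ℓ, g ℓ (x ℓ) = ∑ ℓ, g ⟨0, hN0⟩ (x ℓ) := by
          exact Finset.sum_congr rfl fun ℓ _ => by rw [h0 ℓ]
      _ = ∑ m, ∑ ℓ ∈ Finset.univ.filter fun ℓ => x ℓ = m, g ⟨0, hN0⟩ (x ℓ) :=
          (Finset.sum_fiberwise _ _ _).symm
      _ = ∑ m, (k m : ℝ) * g ⟨0, hN0⟩ m := by
          refine Finset.sum_congr rfl fun m _ => ?_
          rw [Finset.sum_congr rfl (fun ℓ hℓ => by rw [(Finset.mem_filter.mp hℓ).2]),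
            Finset.sum_const, hx m, nsmul_eq_mul]
      _ = 0 := hg _
end
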